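/- Let G be the disjoint union of three stars S_1, S_2, S_3 with n_1 ≥ n_2 ≥ n_3 vertices respectively, with n = n_1 + n_2 + n_3 = d^h a power of d ≥ 2 and n_1 ≥ n/d. Let T be a complete d-regular tree of height h. Then the minimum total arrangement cost equals 2·(h_1·n_1 − (d^{h_1}−1)/(d−1)) + 2·(h_2·n_2 − (d^{h_2}−1)/(d−1)) + 2·(h_3·n_3 − (d^{h_3}−1)/(d−1)), where h_i = ⌈log_d n_i⌉. -/

import Mathlib

/-- The complete `d`-regular tree of height `h`: vertices are pairs of a level
`k ∈ {0,…,h}` and an index in `Fin (d^k)`; the parent of vertex `m` at level `k+1`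
is vertex `m / d` at level `k`.  Leaves are the vertices at level `h`, and the
canonical order of leaves is the order of their indices. -/
def dAryTree (d h : ℕ) : SimpleGraph ((k : Fin (h + 1)) × Fin (d ^ (k : ℕ))) where
  Adj x y := (x.1.val + 1 = y.1.val ∧ x.2.val = y.2.val / d) ∨
             (y.1.val + 1 = x.1.val ∧ y.2.val = x.2.val / d)
  symm := ⟨fun _ _ hxy => hxy.symm⟩
  loopless := ⟨by rintro x (⟨h1, _⟩ | ⟨h1, _⟩) <;> omega⟩

/-- The `i`-th leaf (in canonical order) of the complete `d`-regular tree of height `h`. -/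
def leafVert (d h : ℕ) (i : Fin (d ^ h)) : (k : Fin (h + 1)) × Fin (d ^ (k : ℕ)) :=
  ⟨⟨h, Nat.lt_succ_self h⟩, i⟩

/-- The distance in the complete `d`-regular tree of height `h` between its `i`-th and
`j`-th leaves (in canonical order). -/
noncomputable def leafDist (d h : ℕ) (i j : Fin (d ^ h)) : ℕ :=
  (dAryTree d h).dist (leafVert d h i) (leafVert d h j)

/-- Given an arrangement `φ` of vertices on leaves, the leaf distance associated to an
unordered pair of vertices. -/
noncomputable def edgeDist {V : Type*} (d h : ℕ) (φ : V → Fin (d ^ h)) : Sym2 V → ℕ :=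
  Sym2.lift ⟨fun u v => leafDist d h (φ u) (φ v), fun _ _ => SimpleGraph.dist_comm⟩

/-- The guest graph is the disjoint union of three stars; its vertex type is
`(i : Fin 3) × Fin (n i)`, where in block `i` the central vertex is `⟨i, 0⟩`, adjacent to
all other vertices `⟨i, v⟩`, `v ≠ 0`.  `triStarCost` is the total leaf-distance of an
arrangement `φ` on the leaves of the complete `d`-regular tree of height `h`. -/
noncomputable def triStarCost (d h : ℕ) (n : Fin 3 → ℕ)
    (φ : ((i : Fin 3) × Fin (n i)) → Fin (d ^ h)) : ℕ :=
  ∑ i : Fin 3, ∑ v : Fin (n i),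
    if v.val = 0 then 0 else leafDist d h (φ ⟨i, ⟨0, v.pos⟩⟩) (φ ⟨i, v⟩)


namespace ThreeStars

/-- least `m` with `i / d^m = j / d^m`. -/
noncomputable def m0 (d i j : ℕ) : ℕ := sInf {m | i / d ^ m = j / d ^ m}

variable {d h : ℕ}

lemma agree_mono {i j m t : ℕ} (hm : i / d ^ m = j / d ^ m) (ht : m ≤ t) :
    i / d ^ t = j / d ^ t := by
  obtain ⟨k, rfl⟩ := Nat.exists_eq_add_of_le ht
  induction k with
  | zero => simpa using hm
  | succ k ih =>
    have : m + (k + 1) = (m + k) + 1 := by omega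
    rw [this, pow_succ, ← Nat.div_div_eq_div_mul, ← Nat.div_div_eq_div_mul, ih (by omega)]

lemma mem_m0_set {i j : ℕ} (hi : i < d ^ h) (hj : j < d ^ h) :
    h ∈ {m | i / d ^ m = j / d ^ m} := by
  simp [Set.mem_setOf_eq, Nat.div_eq_of_lt hi, Nat.div_eq_of_lt hj]

lemma m0_le {i j : ℕ} (hi : i < d ^ h) (hj : j < d ^ h) : m0 d i j ≤ h :=
  Nat.sInf_le (mem_m0_set hi hj)

lemma agree_m0 {i j : ℕ} (hi : i < d ^ h) (hj : j < d ^ h) :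
    i / d ^ (m0 d i j) = j / d ^ (m0 d i j) :=
  Nat.sInf_mem ⟨h, mem_m0_set hi hj⟩

lemma agree_of_m0_le {i j t : ℕ} (hi : i < d ^ h) (hj : j < d ^ h)
    (ht : m0 d i j ≤ t) : i / d ^ t = j / d ^ t :=
  agree_mono (agree_m0 hi hj) ht

lemma differ_of_lt_m0 {i j t : ℕ} (ht : t < m0 d i j) : i / d ^ t ≠ j / d ^ t :=
  Nat.notMem_of_lt_sInf (s := {m | i / d ^ m = j / d ^ m}) ht

lemma m0_self (i : ℕ) : m0 d i i = 0 :=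
  Nat.le_zero.mp (Nat.sInf_le rfl)

/-- the ancestor of leaf `i` that is `s` levels up. -/
def anc (d h i s : ℕ) (hi : i < d ^ h) (hs : s ≤ h) : (k : Fin (h + 1)) × Fin (d ^ (k : ℕ)) :=
  ⟨⟨h - s, by omega⟩, ⟨i / d ^ s, by
    apply Nat.div_lt_of_lt_mul
    calc i < d ^ h := hi
    _ = d ^ s * d ^ (h - s) := by rw [← pow_add]; congr 1; omega⟩⟩

lemma anc_zero (d h i : ℕ) (hi : i < d ^ h) (h0 : 0 ≤ h) :
    anc d h i 0 hi (Nat.zero_le _) = leafVert d h ⟨i, hi⟩ := by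
  unfold anc leafVert
  apply Sigma.ext
  · simp
  · simp

lemma anc_adj (d h i s : ℕ) (hi : i < d ^ h) (hs : s + 1 ≤ h) :
    (dAryTree d h).Adj (anc d h i (s + 1) hi hs) (anc d h i s hi (by omega)) := by
  change (_ ∧ _) ∨ (_ ∧ _)
  left
  constructor
  · show h - (s + 1) + 1 = h - s; omega
  · show i / d ^ (s + 1) = (i / d ^ s) / d
    rw [pow_succ, Nat.div_div_eq_div_mul]

lemma exists_walk_anc (d h i : ℕ) (hi : i < d ^ h) :
    ∀ s (hs : s ≤ h), ∃ w : (dAryTree d h).Walk (anc d h i 0 hi (Nat.zero_le _)) (anc d h i s hi hs),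
      w.length = s := by
  intro s
  induction s with
  | zero => exact fun _ => ⟨SimpleGraph.Walk.nil, rfl⟩
  | succ s ih =>
    intro hs
    obtain ⟨w, hw⟩ := ih (by omega)
    exact ⟨w.concat (anc_adj d h i s hi hs).symm, by simp [SimpleGraph.Walk.length_concat, hw]⟩

lemma exists_walk_leaf (i j : Fin (d ^ h)) :
    ∃ w : (dAryTree d h).Walk (leafVert d h i) (leafVert d h j), w.length = 2 * m0 d i.val j.val := by
  have hm : m0 d i.val j.val ≤ h := m0_le i.2 j.2
  obtain ⟨w1, hw1⟩ := exists_walk_anc d h i.val i.2 (m0 d i.val j.val) hm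
  obtain ⟨w2, hw2⟩ := exists_walk_anc d h j.val j.2 (m0 d i.val j.val) hm
  have key : anc d h i.val (m0 d i.val j.val) i.2 hm = anc d h j.val (m0 d i.val j.val) j.2 hm := by
    unfold anc
    apply Sigma.ext
    · rfl
    · exact heq_of_eq (Fin.ext (agree_m0 i.2 j.2))
  refine ⟨(w1.copy (anc_zero d h i.val i.2 (Nat.zero_le _)) rfl).append
    (w2.reverse.copy key.symm (anc_zero d h j.val j.2 (Nat.zero_le _))), ?_⟩
  simp [SimpleGraph.Walk.length_append, SimpleGraph.Walk.length_copy,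
    SimpleGraph.Walk.length_reverse, hw1, hw2, two_mul]

lemma leafDist_le (i j : Fin (d ^ h)) :
    leafDist d h i j ≤ 2 * m0 d i.val j.val := by
  obtain ⟨w, hw⟩ := exists_walk_leaf i j
  have := SimpleGraph.dist_le w
  rw [hw] at this
  exact this

lemma abs_sub_le_walk_length (f : ((k : Fin (h + 1)) × Fin (d ^ (k : ℕ))) → ℤ)
    (hf : ∀ u v, (dAryTree d h).Adj u v → |f u - f v| ≤ 1)
    {u v} (p : (dAryTree d h).Walk u v) : |f u - f v| ≤ p.length := by
  induction p with
  | nil => simp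
  | cons ha p ih =>
    calc |f _ - f _| ≤ |f _ - f _| + |f _ - f _| := abs_sub_le _ _ _
    _ ≤ 1 + p.length := add_le_add (hf _ _ ha) ih
    _ = _ := by push_cast [SimpleGraph.Walk.length_cons]; ring


lemma leafDist_ge (i j : Fin (d ^ h)) :
    2 * m0 d i.val j.val ≤ leafDist d h i j := by
  by_cases hij : (i : ℕ) = (j : ℕ)
  · have : i = j := Fin.ext hij
    subst this
    simp [m0_self]
  set m := m0 d i.val j.val with hmdef
  have hmh : m ≤ h := m0_le i.2 j.2
  have hm1 : 1 ≤ m := by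
    by_contra hc
    have hm0 : m = 0 := by omega
    have := agree_m0 (d := d) (h := h) i.2 j.2
    rw [← hmdef, hm0] at this
    simp at this
    exact hij this
  set L := h - m + 1 with hLdef
  set B := (i : ℕ) / d ^ (m - 1) with hBdef
  set f : ((k : Fin (h + 1)) × Fin (d ^ (k : ℕ))) → ℤ := fun x =>
    if (L ≤ (x.1 : ℕ) ∧ (x.2 : ℕ) / d ^ ((x.1 : ℕ) - L) = B) then ((x.1 : ℕ) : ℤ)
    else 2 * ((h : ℤ) - (m : ℤ)) - ((x.1 : ℕ) : ℤ) with hfdef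
  have hf : ∀ u v, (dAryTree d h).Adj u v → |f u - f v| ≤ 1 := by
    have hstep : ∀ u v : ((k : Fin (h + 1)) × Fin (d ^ (k : ℕ))),
        ((u.1 : ℕ) + 1 = (v.1 : ℕ) ∧ (u.2 : ℕ) = (v.2 : ℕ) / d) → |f u - f v| ≤ 1 := by
      rintro ⟨⟨k, hkk⟩, ⟨a, ha⟩⟩ ⟨⟨k', hkk'⟩, ⟨b, hb⟩⟩ ⟨hk, hq⟩
      simp only at hk hq
      have hk' : k' = k + 1 := hk.symm
      subst hk'
      have hdiv : b / d ^ (k + 1 - L) = a / d ^ (k - L) ∨ k + 1 ≤ L := by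
        rcases le_or_gt L k with hLk | hLk
        · left
          have h1 : k + 1 - L = (k - L) + 1 := by omega
          rw [h1, pow_succ', ← Nat.div_div_eq_div_mul, hq]
        · right; omega
      by_cases c1 : L ≤ k ∧ a / d ^ (k - L) = B <;>
        by_cases c2 : L ≤ k + 1 ∧ b / d ^ (k + 1 - L) = B <;>
          simp only [hfdef, Fin.val_mk]
      · rw [if_pos c1, if_pos c2, abs_le]; constructor <;> push_cast <;> omega
      · exfalso
        rcases hdiv with hd1 | hd1
        · exact c2 ⟨by omega, by rw [hd1]; exact c1.2⟩
        · omega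
      · -- ¬c1, c2
        rw [if_neg c1, if_pos c2]
        have hkL : k + 1 = L := by
          rcases le_or_gt L k with hLk | hLk
          · exfalso
            rcases hdiv with hd1 | hd1
            · exact c1 ⟨hLk, by rw [← hd1]; exact c2.2⟩
            · omega
          · omega
        rw [abs_le]; constructor <;> push_cast <;> omega
      · rw [if_neg c1, if_neg c2, abs_le]; constructor <;> push_cast <;> omega
    intro u v hadj
    change (_ ∧ _) ∨ (_ ∧ _) at hadj
    rcases hadj with h1 | h1
    · exact hstep u v h1
    · rw [abs_sub_comm]; exact hstep v u h1
  obtain ⟨w0, hw0⟩ := exists_walk_leaf i j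
  obtain ⟨p, hp⟩ := (SimpleGraph.Walk.reachable w0).exists_walk_length_eq_dist
  have hlip := abs_sub_le_walk_length f hf p
  rw [hp] at hlip
  have hfi : f (leafVert d h i) = (h : ℤ) := by
    have hcond : L ≤ ((⟨h, Nat.lt_succ_self h⟩ : Fin (h+1)) : ℕ) ∧
        ((i : ℕ)) / d ^ (h - L) = B := by
      constructor
      · simp; omega
      · have : h - L = m - 1 := by omega
        rw [this]
    simp only [hfdef, leafVert]
    rw [if_pos hcond]
  have hfj : f (leafVert d h j) = 2 * ((h : ℤ) - (m : ℤ)) - (h : ℤ) := by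
    have hcond : ¬ (L ≤ ((⟨h, Nat.lt_succ_self h⟩ : Fin (h+1)) : ℕ) ∧
        ((j : ℕ)) / d ^ (h - L) = B) := by
      rintro ⟨-, hc⟩
      have heq : h - L = m - 1 := by omega
      rw [heq] at hc
      exact differ_of_lt_m0 (by omega : m - 1 < m0 d i.val j.val) hc.symm
    simp only [hfdef, leafVert]
    rw [if_neg hcond]
  rw [hfi, hfj] at hlip
  have habs : |(h : ℤ) - (2 * ((h : ℤ) - (m : ℤ)) - (h : ℤ))| = 2 * m := by
    rw [abs_of_nonneg] <;> push_cast <;> omega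
  rw [habs] at hlip
  unfold leafDist
  exact_mod_cast hlip

lemma leafDist_eq (i j : Fin (d ^ h)) :
    leafDist d h i j = 2 * m0 d i.val j.val :=
  le_antisymm (leafDist_le i j) (leafDist_ge i j)
open Finset

/-- standalone optimum of a star with `n` vertices (half of it). -/
noncomputable def Vn (d n : ℕ) : ℕ := ∑ t ∈ Finset.range (Nat.clog d n), (n - d ^ t)

variable {d h : ℕ}

lemma m0_eq_card {i j : ℕ} (hi : i < d ^ h) (hj : j < d ^ h) :
    m0 d i j = ((Finset.range h).filter (fun t => ¬ (i / d ^ t = j / d ^ t))).card := by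
  have hset : (Finset.range h).filter (fun t => ¬ (i / d ^ t = j / d ^ t))
      = Finset.range (m0 d i j) := by
    ext t
    simp only [Finset.mem_filter, Finset.mem_range]
    constructor
    · rintro ⟨ht, hdif⟩
      by_contra hc
      exact hdif (agree_of_m0_le hi hj (by omega))
    · intro ht
      exact ⟨by have := m0_le hi hj; omega, differ_of_lt_m0 ht⟩
  rw [hset, Finset.card_range]

/-- number of `v` whose image shares the first `h - t` digits with the center. -/
noncomputable def share (d : ℕ) {h n : ℕ} (ψ : Fin n → Fin (d ^ h)) (x : Fin (d ^ h)) (t : ℕ) : ℕ :=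
  (Finset.univ.filter (fun v : Fin n => ((ψ v : ℕ)) / d ^ t = ((x : ℕ)) / d ^ t)).card

lemma star_cost_eq {n : ℕ} (hn : 0 < n) (ψ : Fin n → Fin (d ^ h)) :
    (∑ v : Fin n, if (v : ℕ) = 0 then 0 else leafDist d h (ψ ⟨0, hn⟩) (ψ v))
      = 2 * ∑ t ∈ Finset.range h, (n - share d ψ (ψ ⟨0, hn⟩) t) := by
  have step1 : ∀ v : Fin n,
      (if (v : ℕ) = 0 then 0 else leafDist d h (ψ ⟨0, hn⟩) (ψ v))
        = 2 * m0 d ((ψ ⟨0, hn⟩ : ℕ)) ((ψ v : ℕ)) := by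
    intro v
    by_cases hv : (v : ℕ) = 0
    · have : v = ⟨0, hn⟩ := Fin.ext hv
      subst this
      rw [if_pos hv, m0_self]
    · rw [if_neg hv, leafDist_eq]
  rw [Finset.sum_congr rfl (fun v _ => step1 v), ← Finset.mul_sum]
  congr 1
  have step2 : ∀ v : Fin n, m0 d ((ψ ⟨0, hn⟩ : ℕ)) ((ψ v : ℕ))
      = ∑ t ∈ Finset.range h, if ¬ (((ψ ⟨0, hn⟩ : ℕ)) / d ^ t = ((ψ v : ℕ)) / d ^ t) then 1 else 0 := by
    intro v
    rw [m0_eq_card (ψ ⟨0, hn⟩).2 (ψ v).2, Finset.card_filter]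
  rw [Finset.sum_congr rfl (fun v _ => step2 v), Finset.sum_comm]
  refine Finset.sum_congr rfl (fun t _ => ?_)
  rw [← Finset.card_filter]
  have : Finset.univ.filter (fun v : Fin n => ¬ (((ψ ⟨0, hn⟩ : ℕ)) / d ^ t = ((ψ v : ℕ)) / d ^ t))
      = Finset.univ \ Finset.univ.filter (fun v : Fin n => ((ψ v : ℕ)) / d ^ t = ((ψ ⟨0, hn⟩ : ℕ)) / d ^ t) := by
    rw [← Finset.filter_not]
    congr 1
    ext v
    exact not_iff_not.mpr eq_comm
  rw [this, Finset.card_sdiff_of_subset (Finset.filter_subset _ _)]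
  simp [share]

lemma share_le_min {n : ℕ} (ψ : Fin n → Fin (d ^ h)) (hψ : Function.Injective ψ)
    (x : Fin (d ^ h)) (t : ℕ) (hd : 0 < d) :
    share d ψ x t ≤ min n (d ^ t) := by
  apply le_min
  · exact le_trans (Finset.card_filter_le _ _) (by simp)
  · unfold share
    have hp : 0 < d ^ t := pow_pos hd t
    have hcard : (Finset.Ico (((x:ℕ)) / d ^ t * d ^ t) (((x:ℕ)) / d ^ t * d ^ t + d ^ t)).card = d ^ t := by
      rw [Nat.card_Ico]; omega
    refine le_trans (Finset.card_le_card_of_injOn (fun v => (ψ v : ℕ)) ?_ ?_) (le_of_eq hcard)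
    · intro v hv
      simp only [Finset.mem_coe, Finset.mem_filter] at hv
      refine Finset.mem_Ico.mpr ?_
      have hg : ((fun v : Fin n => ((ψ v : ℕ))) v) = ((ψ v : ℕ)) := rfl
      rw [hg, ← hv.2]
      constructor
      · exact Nat.div_mul_le_self _ _
      · have h2 := Nat.mod_lt ((ψ v : ℕ)) hp
        have h1 : (ψ v : ℕ) / d ^ t * d ^ t + (ψ v : ℕ) % d ^ t = (ψ v : ℕ) := Nat.div_add_mod' _ _
        omega
    · intro u hu v hv huv
      exact hψ (Fin.ext huv)

lemma sum_min_eq (hd : 2 ≤ d) {n : ℕ} (hn : n ≤ d ^ h) :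
    ∑ t ∈ Finset.range h, (n - min n (d ^ t)) = Vn d n := by
  have hd1 : 1 < d := hd
  have hH : Nat.clog d n ≤ h := (Nat.clog_le_iff_le_pow hd1).mpr hn
  rw [Vn]
  rw [← Finset.sum_subset (Finset.range_subset_range.mpr hH)]
  · refine Finset.sum_congr rfl (fun t ht => ?_)
    have : d ^ t < n := (Nat.lt_clog_iff_pow_lt hd1).mp (Finset.mem_range.mp ht)
    rw [min_eq_right this.le]
  · intro t ht hnt
    have : n ≤ d ^ t := by
      calc n ≤ d ^ Nat.clog d n := Nat.le_pow_clog hd1 n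
      _ ≤ d ^ t := Nat.pow_le_pow_right (by omega) (by simp at hnt ht; omega)
    rw [min_eq_left this]
    omega

lemma Vn_cast (hd : 2 ≤ d) (n : ℕ) :
    ((2 * Vn d n : ℕ) : ℚ) = 2 * ((Nat.clog d n : ℚ) * n - ((d:ℚ) ^ Nat.clog d n - 1) / ((d:ℚ) - 1)) := by
  have hd1 : 1 < d := hd
  have hdq : (d : ℚ) ≠ 1 := by
    intro hc
    have : (d : ℚ) = ((1 : ℕ) : ℚ) := by rw [hc]; norm_num
    have := Nat.cast_injective this
    omega
  rw [Nat.cast_mul, Vn, Nat.cast_sum]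
  have hterm : ∀ t ∈ Finset.range (Nat.clog d n), ((n - d ^ t : ℕ) : ℚ) = (n : ℚ) - (d : ℚ) ^ t := by
    intro t ht
    have : d ^ t < n := (Nat.lt_clog_iff_pow_lt hd1).mp (Finset.mem_range.mp ht)
    rw [Nat.cast_sub this.le]
    push_cast
    ring
  rw [Finset.sum_congr rfl hterm, Finset.sum_sub_distrib, geom_sum_eq hdq, Finset.sum_const,
    Finset.card_range]
  push_cast
  ring

/-- The sharing-count condition characterizing optimal star placements. -/
def SC (d h : ℕ) (S : Finset ℕ) (x n : ℕ) : Prop :=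
  ∀ t < h, (S.filter (fun y => y / d ^ t = x / d ^ t)).card = min n (d ^ t)

lemma quot_eq_iff {p a : ℕ} (hp : 0 < p) (ha : p ∣ a) (y : ℕ) :
    y / p = a / p ↔ a ≤ y ∧ y < a + p := by
  obtain ⟨q, rfl⟩ := ha
  rw [Nat.mul_div_cancel_left _ hp]
  have hc : p * q = q * p := Nat.mul_comm _ _
  constructor
  · intro hq
    have h3 : y / p * p + y % p = y := Nat.div_add_mod' _ _
    have h2 := Nat.mod_lt y hp
    rw [hq] at h3
    omega
  · rintro ⟨h1, h2⟩
    have hle : q * p ≤ y := by omega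
    have hlt : y < (q + 1) * p := by
      have : (q + 1) * p = q * p + p := by ring
      omega
    exact Nat.div_eq_of_lt_le hle hlt

lemma SC_of {S : Finset ℕ} {x n : ℕ} (hd : 0 < d) (hx : x ∈ S) (hcard : S.card = n)
    (key : ∀ t, t < h → ∃ A, d ^ t ∣ A ∧ A ≤ x ∧ x < A + d ^ t ∧
      ((d ^ t ≤ n ∧ ∀ y, A ≤ y → y < A + d ^ t → y ∈ S) ∨
       (n ≤ d ^ t ∧ ∀ y ∈ S, A ≤ y ∧ y < A + d ^ t))) :
    SC d h S x n := by
  intro t ht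
  obtain ⟨A, hdvd, hAx, hxA, hkey⟩ := key t ht
  have hp : 0 < d ^ t := pow_pos hd t
  have hxq : x / d ^ t = A / d ^ t := (quot_eq_iff hp hdvd x).mpr ⟨hAx, hxA⟩
  have hmem : ∀ y : ℕ, (y / d ^ t = x / d ^ t) ↔ (A ≤ y ∧ y < A + d ^ t) := by
    intro y; rw [hxq]; exact quot_eq_iff hp hdvd y
  rcases hkey with ⟨hle, hsub⟩ | ⟨hge, hsub⟩
  · have heq : S.filter (fun y => y / d ^ t = x / d ^ t) = Finset.Ico A (A + d ^ t) := by
      ext y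
      simp only [Finset.mem_filter, Finset.mem_Ico, hmem y]
      constructor
      · exact fun hy => hy.2
      · intro hy; exact ⟨hsub y hy.1 hy.2, hy⟩
    rw [heq, Nat.card_Ico, min_eq_right hle]
    omega
  · have heq : S.filter (fun y => y / d ^ t = x / d ^ t) = S := by
      apply Finset.filter_true_of_mem
      intro y hy
      exact (hmem y).mpr (hsub y hy)
    rw [heq, hcard, min_eq_left hge]

lemma exists_psi {n : ℕ} (hn : 0 < n) (S : Finset ℕ) (hcard : S.card = n) (x : ℕ) (hx : x ∈ S)
    (hsub : ∀ y ∈ S, y < d ^ h) :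
    ∃ ψ : Fin n → Fin (d ^ h), Function.Injective ψ ∧ (∀ v, ((ψ v : ℕ)) ∈ S) ∧
      (Finset.univ.image (fun v => ((ψ v : ℕ)))) = S ∧ ((ψ ⟨0, hn⟩ : ℕ)) = x := by
  have hcard' : Fintype.card {y // y ∈ S} = n := by
    rw [Fintype.card_coe, hcard]
  let e : Fin n ≃ {y // y ∈ S} := (Fintype.equivFinOfCardEq hcard').symm
  let e' : Fin n ≃ {y // y ∈ S} := (Equiv.swap (⟨0, hn⟩ : Fin n) (e.symm ⟨x, hx⟩)).trans e
  refine ⟨fun v => ⟨((e' v : ℕ)), hsub _ (e' v).2⟩, ?_, ?_, ?_, ?_⟩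
  · intro a b hab
    apply e'.injective
    apply Subtype.ext
    exact congrArg Fin.val hab
  · intro v; exact (e' v).2
  · apply Finset.eq_of_subset_of_card_le
    · intro y hy
      simp only [Finset.mem_image] at hy
      obtain ⟨v, _, rfl⟩ := hy
      exact (e' v).2
    · rw [hcard]
      rw [Finset.card_image_of_injective _ (fun a b hab => e'.injective (Subtype.ext hab))]
      simp
  · show ((e' ⟨0, hn⟩ : ℕ)) = x
    have : e' ⟨0, hn⟩ = ⟨x, hx⟩ := by
      show e ((Equiv.swap (⟨0, hn⟩ : Fin n) (e.symm ⟨x, hx⟩)) ⟨0, hn⟩) = ⟨x, hx⟩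
      rw [Equiv.swap_apply_left, Equiv.apply_symm_apply]
    rw [this]

lemma star_cost_opt {n : ℕ} (hd : 2 ≤ d) (hn : 0 < n) (ψ : Fin n → Fin (d ^ h))
    (hinj : Function.Injective ψ) (S : Finset ℕ)
    (himg : Finset.univ.image (fun v => ((ψ v : ℕ))) = S)
    (hSC : SC d h S ((ψ ⟨0, hn⟩ : ℕ)) n) (hn' : n ≤ d ^ h) :
    (∑ v : Fin n, if (v : ℕ) = 0 then 0 else leafDist d h (ψ ⟨0, hn⟩) (ψ v)) = 2 * Vn d n := by
  rw [star_cost_eq hn ψ]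
  congr 1
  rw [← sum_min_eq hd hn']
  refine Finset.sum_congr rfl fun t ht => ?_
  congr 1
  have hbr : share d ψ (ψ ⟨0, hn⟩) t
      = (S.filter (fun y => y / d ^ t = ((ψ ⟨0, hn⟩ : ℕ)) / d ^ t)).card := by
    rw [← himg, Finset.filter_image]
    rw [Finset.card_image_of_injective _ (fun a b hab => hinj (Fin.ext hab))]
    rfl
  rw [hbr, hSC t (Finset.mem_range.mp ht)]

lemma sigma_fin_injective {n : Fin 3 → ℕ} {i : Fin 3} :
    Function.Injective (fun v : Fin (n i) => (⟨i, v⟩ : (j : Fin 3) × Fin (n j))) := by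
  intro a b hab
  have := Sigma.ext_iff.mp hab
  exact eq_of_heq this.2

lemma cost_ge (n : Fin 3 → ℕ) (φ : ((i : Fin 3) × Fin (n i)) → Fin (d ^ h))
    (hd : 2 ≤ d) (hφ : Function.Injective φ) :
    ∑ i : Fin 3, 2 * Vn d (n i) ≤ triStarCost d h n φ := by
  unfold triStarCost
  apply Finset.sum_le_sum
  intro i _
  rcases Nat.eq_zero_or_pos (n i) with h0 | hn
  · have : Vn d (n i) = 0 := by rw [h0]; simp [Vn]
    rw [this]
    exact Nat.zero_le _
  · set ψ : Fin (n i) → Fin (d ^ h) := fun v => φ ⟨i, v⟩ with hψdef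
    have hinj : Function.Injective ψ := fun a b hab => sigma_fin_injective (hφ hab)
    have hn' : n i ≤ d ^ h := by
      have := Fintype.card_le_of_injective ψ hinj
      simpa using this
    have hmain : (∑ v : Fin (n i), if (v : ℕ) = 0 then 0
        else leafDist d h (ψ ⟨0, hn⟩) (ψ v)) ≥ 2 * Vn d (n i) := by
      rw [star_cost_eq hn ψ]
      have : Vn d (n i) ≤ ∑ t ∈ Finset.range h, (n i - share d ψ (ψ ⟨0, hn⟩) t) := by
        rw [← sum_min_eq hd hn']
        apply Finset.sum_le_sum
        intro t _
        exact Nat.sub_le_sub_left (share_le_min ψ hinj _ t (by omega)) _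
      omega
    exact hmain

lemma exists_arrangement (hd : 2 ≤ d) (n : Fin 3 → ℕ)
    (S : Fin 3 → Finset ℕ) (x : Fin 3 → ℕ)
    (hsub : ∀ i, ∀ y ∈ S i, y < d ^ h)
    (hcard : ∀ i, (S i).card = n i)
    (hdisj : ∀ i j, i ≠ j → Disjoint (S i) (S j))
    (hx : ∀ i, 0 < n i → x i ∈ S i)
    (hSC : ∀ i, 0 < n i → SC d h (S i) (x i) (n i)) :
    ∃ φ : ((i : Fin 3) × Fin (n i)) → Fin (d ^ h),
      Function.Injective φ ∧ triStarCost d h n φ = ∑ i : Fin 3, 2 * Vn d (n i) := by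
  have key : ∀ i : Fin 3, ∃ ψ : Fin (n i) → Fin (d ^ h), Function.Injective ψ ∧
      (∀ v, ((ψ v : ℕ)) ∈ S i) ∧
      (∑ v : Fin (n i), if (v : ℕ) = 0 then 0 else leafDist d h (ψ ⟨0, v.pos⟩) (ψ v))
        = 2 * Vn d (n i) := by
    intro i
    rcases Nat.eq_zero_or_pos (n i) with h0 | hn
    · refine ⟨fun _ => ⟨0, by positivity⟩, ?_, ?_, ?_⟩
      · intro a b _
        exact Fin.ext (by omega)
      · intro v; exact absurd v.2 (by omega)
      · rw [Finset.sum_eq_zero (fun v _ => absurd v.2 (by omega))]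
        rw [h0]
        simp [Vn]
    · obtain ⟨ψ, hinj, hmem, himg, hcen⟩ := exists_psi hn (S i) (hcard i) (x i) (hx i hn) (hsub i)
      refine ⟨ψ, hinj, hmem, ?_⟩
      have hn' : n i ≤ d ^ h := by
        have := Fintype.card_le_of_injective ψ hinj
        simpa using this
      have := star_cost_opt hd hn ψ hinj (S i) himg (by rw [hcen]; exact hSC i hn) hn'
      exact this
  choose ψs hinj hmem hcost using key
  refine ⟨fun p => ψs p.1 p.2, ?_, ?_⟩
  · rintro ⟨i, v⟩ ⟨j, w⟩ heq
    by_cases hij : i = j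
    · subst hij
      exact congrArg (Sigma.mk i) (hinj i heq)
    · exfalso
      have h1 : ((ψs i v : ℕ)) ∈ S i := hmem i v
      have h2 : ((ψs i v : ℕ)) ∈ S j := by
        have : ψs i v = ψs j w := heq
        rw [this]
        exact hmem j w
      exact Finset.disjoint_left.mp (hdisj i j hij) h1 h2
  · unfold triStarCost
    exact Finset.sum_congr rfl fun i _ => hcost i
lemma mod_sub_helper {p M r : ℕ} (hp : 0 < p) (hdvd : p ∣ M) (hr : 0 < r) (hrp : r ≤ p)
    (hM : p ≤ M) : (M - r) % p = p - r := by
  obtain ⟨m, rfl⟩ := hdvd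
  have hm : 1 ≤ m := by
    rcases Nat.eq_zero_or_pos m with h0 | h1
    · subst h0; simp at hM; omega
    · exact h1
  obtain ⟨m', rfl⟩ := Nat.exists_eq_add_of_le hm
  have hmul : p * (1 + m') = p * m' + p := by ring
  have heq : p * (1 + m') - r = (p - r) + p * m' := by omega
  rw [heq, Nat.add_mul_mod_self_left, Nat.mod_eq_of_lt (by omega)]

lemma SC_interval (hd : 2 ≤ d) {a nn : ℕ} (hn : 0 < nn)
    (hgood : ∀ t, t < h → d ^ t ∣ a ∨ a % d ^ t + nn ≤ d ^ t) :
    SC d h (Finset.Ico a (a + nn)) a nn := by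
  have hd0 : 0 < d := by omega
  apply SC_of hd0 (Finset.mem_Ico.mpr ⟨le_refl a, by omega⟩) (by rw [Nat.card_Ico]; omega)
  intro t ht
  have hp : 0 < d ^ t := pow_pos hd0 t
  rcases hgood t ht with hdvd | hmod
  · refine ⟨a, hdvd, le_refl a, by omega, ?_⟩
    rcases le_or_gt (d ^ t) nn with hle | hlt
    · exact Or.inl ⟨hle, fun y h1 h2 => Finset.mem_Ico.mpr ⟨h1, by omega⟩⟩
    · refine Or.inr ⟨hlt.le, fun y hy => ?_⟩
      rw [Finset.mem_Ico] at hy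
      omega
  · have hA1 : a / d ^ t * d ^ t + a % d ^ t = a := Nat.div_add_mod' _ _
    have hA2 : a % d ^ t < d ^ t := Nat.mod_lt _ hp
    have hA3 : a / d ^ t * d ^ t ≤ a := Nat.div_mul_le_self _ _
    refine ⟨a / d ^ t * d ^ t, dvd_mul_left _ _, by omega, by omega, ?_⟩
    refine Or.inr ⟨by omega, fun y hy => ?_⟩
    rw [Finset.mem_Ico] at hy
    omega

lemma SC_zero (hd : 2 ≤ d) {S : Finset ℕ} {nn : ℕ} (hx : 0 ∈ S) (hcard : S.card = nn)
    (hmin : ∀ t, t < h → d ^ t ≤ nn) (hsub : ∀ t, t < h → ∀ y, y < d ^ t → y ∈ S) :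
    SC d h S 0 nn := by
  have hd0 : 0 < d := by omega
  apply SC_of hd0 hx hcard
  intro t ht
  have hp : 0 < d ^ t := pow_pos hd0 t
  exact ⟨0, dvd_zero _, le_refl 0, by omega,
    Or.inl ⟨hmin t ht, fun y h1 h2 => hsub t ht y (by omega)⟩⟩

lemma SC_top (hd : 2 ≤ d) {nn : ℕ} (hn : 1 ≤ nn) (hnn : nn ≤ d ^ h) :
    SC d h (Finset.Ico (d ^ h - nn) (d ^ h)) (d ^ h - d ^ (Nat.clog d nn - 1)) nn := by
  have hd0 : 0 < d := by omega
  set H := Nat.clog d nn with hH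
  set g := d ^ (H - 1) with hg
  have hg1 : 1 ≤ g := pow_pos hd0 _
  have hgnn : g ≤ nn := by
    rcases le_or_gt nn 1 with h1 | h1
    · have : nn = 1 := by omega
      rw [this] at hH ⊢
      simp [hg, hH, Nat.clog_one_right]
    · have hHpos : 0 < H := Nat.clog_pos hd h1
      have : d ^ (H - 1) < nn := (Nat.lt_clog_iff_pow_lt hd).mp (by omega)
      omega
  have hnnH : nn ≤ d ^ H := Nat.le_pow_clog hd nn
  have hHh : H ≤ h := (Nat.clog_le_iff_le_pow hd).mpr hnn
  have hNpos : 1 ≤ d ^ h := pow_pos hd0 _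
  apply SC_of hd0 (Finset.mem_Ico.mpr ⟨by omega, by omega⟩) (by rw [Nat.card_Ico]; omega)
  intro t ht
  have hp : 0 < d ^ t := pow_pos hd0 t
  have hth : d ^ t ≤ d ^ h := Nat.pow_le_pow_right hd0 (by omega)
  rcases le_or_gt (d ^ t) g with htg | htg
  · -- A = d^h - g
    have htH1 : t ≤ H - 1 := by
      by_contra hc
      have : g < d ^ t := by
        rw [hg]
        exact Nat.pow_lt_pow_right hd (by omega)
      omega
    have hdvd : d ^ t ∣ d ^ h - g :=
      Nat.dvd_sub (pow_dvd_pow d (by omega)) (pow_dvd_pow d htH1)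
    refine ⟨d ^ h - g, hdvd, le_refl _, by omega, ?_⟩
    exact Or.inl ⟨by omega, fun y h1 h2 => Finset.mem_Ico.mpr ⟨by omega, by omega⟩⟩
  · -- g < d^t, A = d^h - d^t
    have hHt : d ^ H ≤ d ^ t := by
      apply Nat.pow_le_pow_right hd0
      rcases Nat.eq_zero_or_pos H with h0 | h1
      · omega
      · by_contra hc
        have : d ^ t ≤ d ^ (H - 1) := Nat.pow_le_pow_right hd0 (by omega)
        omega
    have hdvd : d ^ t ∣ d ^ h - d ^ t :=
      Nat.dvd_sub (pow_dvd_pow d (by omega)) dvd_rfl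
    refine ⟨d ^ h - d ^ t, hdvd, by omega, by omega, ?_⟩
    rcases le_or_gt (d ^ t) nn with hle | hlt
    · have hEq : d ^ t = nn := by omega
      refine Or.inl ⟨hle, fun y h1 h2 => Finset.mem_Ico.mpr ⟨by omega, by omega⟩⟩
    · refine Or.inr ⟨hlt.le, fun y hy => ?_⟩
      rw [Finset.mem_Ico] at hy
      omega
def GoodPack (d h : ℕ) (n : Fin 3 → ℕ) : Prop :=
  ∃ (S : Fin 3 → Finset ℕ) (x : Fin 3 → ℕ),
    (∀ i, ∀ y ∈ S i, y < d ^ h) ∧ (∀ i, (S i).card = n i) ∧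
    (∀ i j, i ≠ j → Disjoint (S i) (S j)) ∧ (∀ i, 0 < n i → x i ∈ S i) ∧
    (∀ i, 0 < n i → SC d h (S i) (x i) (n i))

lemma fin3_forall {P : Fin 3 → Prop} (h0 : P 0) (h1 : P 1) (h2 : P 2) : ∀ i, P i := by
  intro i
  fin_cases i
  · exact h0
  · exact h1
  · exact h2

lemma fin3_disj {S : Fin 3 → Finset ℕ} (h01 : Disjoint (S 0) (S 1)) (h02 : Disjoint (S 0) (S 2))
    (h12 : Disjoint (S 1) (S 2)) : ∀ i j, i ≠ j → Disjoint (S i) (S j) := by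
  intro i j hij
  fin_cases i <;> fin_cases j <;>
    first
      | exact absurd rfl hij
      | exact h01 | exact h02 | exact h12
      | exact h01.symm | exact h02.symm | exact h12.symm

lemma ico_disj {a b c e : ℕ} (hbc : b ≤ c) : Disjoint (Finset.Ico a b) (Finset.Ico c e) := by
  apply Finset.disjoint_left.mpr
  intro y h1 h2
  rw [Finset.mem_Ico] at h1 h2
  omega

lemma caseD (hd : 2 ≤ d) (n : Fin 3 → ℕ) (hord1 : n 2 ≤ n 1)
    (hsum : n 0 + n 1 + n 2 = d ^ h) (hn1 : n 1 ≤ 1) : GoodPack d h n := by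
  have hd0 : 0 < d := by omega
  refine ⟨![Finset.Ico 0 (n 0), Finset.Ico (n 0) (n 0 + n 1),
    Finset.Ico (n 0 + n 1) (n 0 + n 1 + n 2)], ![0, n 0, n 0 + n 1],
    fin3_forall ?_ ?_ ?_, fin3_forall ?_ ?_ ?_, fin3_disj ?_ ?_ ?_,
    fin3_forall ?_ ?_ ?_, fin3_forall ?_ ?_ ?_⟩ <;>
    simp only [Matrix.cons_val_zero, Matrix.cons_val_one, Matrix.head_cons,
      Matrix.cons_val_two, Matrix.tail_cons]
  · intro y hy; rw [Finset.mem_Ico] at hy; omega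
  · intro y hy; rw [Finset.mem_Ico] at hy; omega
  · intro y hy; rw [Finset.mem_Ico] at hy; omega
  · rw [Nat.card_Ico]; omega
  · rw [Nat.card_Ico]; omega
  · rw [Nat.card_Ico]; omega
  · exact ico_disj (by omega)
  · exact ico_disj (by omega)
  · exact ico_disj (by omega)
  · intro hpos; rw [Finset.mem_Ico]; omega
  · intro hpos; rw [Finset.mem_Ico]; omega
  · intro hpos; rw [Finset.mem_Ico]; omega
  · intro hpos
    have := SC_interval (h := h) hd hpos (a := 0) (fun t ht => Or.inl (dvd_zero _))
    simpa using this
  · intro hpos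
    exact SC_interval hd hpos (fun t ht => Or.inr (by
      have := Nat.mod_lt (n 0) (pow_pos hd0 t)
      omega))
  · intro hpos
    exact SC_interval hd hpos (fun t ht => Or.inr (by
      have := Nat.mod_lt (n 0 + n 1) (pow_pos hd0 t)
      omega))

lemma g_le (hd : 2 ≤ d) {nn : ℕ} (hn : 1 ≤ nn) :
    1 ≤ d ^ (Nat.clog d nn - 1) ∧ d ^ (Nat.clog d nn - 1) ≤ nn := by
  refine ⟨pow_pos (by omega : 0 < d) _, ?_⟩
  rcases le_or_gt nn 1 with h1 | h1
  · have hnn : nn = 1 := by omega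
    rw [hnn]
    simp [Nat.clog_one_right]
  · have hHpos : 0 < Nat.clog d nn := Nat.clog_pos hd h1
    have : d ^ (Nat.clog d nn - 1) < nn := (Nat.lt_clog_iff_pow_lt hd).mp (by omega)
    omega

lemma caseC (hd : 2 ≤ d) (n : Fin 3 → ℕ) (hord1 : n 2 ≤ n 1) (hord2 : n 1 ≤ n 0)
    (hsum : n 0 + n 1 + n 2 = d ^ h) (hP : d ^ (h - 1) < n 1) : GoodPack d h n := by
  have hd0 : 0 < d := by omega
  have hh1 : 1 ≤ h := by
    by_contra hc
    have h0 : h = 0 := by omega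
    rw [h0] at hsum hP
    simp at hsum hP
    omega
  set N := d ^ h with hN
  set P := d ^ (h - 1) with hPdef
  have hNP : N = P * d := by
    rw [hN, hPdef, ← pow_succ]
    congr 1
    omega
  have hP1 : 1 ≤ P := pow_pos hd0 _
  have hP2 : P * 2 ≤ P * d := Nat.mul_le_mul_left P hd
  have hn2N : n 2 ≤ N := by omega
  refine ⟨![Finset.Ico 0 P ∪ Finset.Ico (P + n 1) (N - n 2),
    Finset.Ico P (P + n 1), Finset.Ico (N - n 2) N],
    ![0, P, N - d ^ (Nat.clog d (n 2) - 1)],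
    fin3_forall ?_ ?_ ?_, fin3_forall ?_ ?_ ?_, fin3_disj ?_ ?_ ?_,
    fin3_forall ?_ ?_ ?_, fin3_forall ?_ ?_ ?_⟩ <;>
    simp only [Matrix.cons_val_zero, Matrix.cons_val_one, Matrix.head_cons,
      Matrix.cons_val_two, Matrix.tail_cons]
  · intro y hy
    rw [Finset.mem_union, Finset.mem_Ico, Finset.mem_Ico] at hy
    omega
  · intro y hy; rw [Finset.mem_Ico] at hy; omega
  · intro y hy; rw [Finset.mem_Ico] at hy; omega
  · rw [Finset.card_union_of_disjoint (ico_disj (by omega)), Nat.card_Ico, Nat.card_Ico]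
    omega
  · rw [Nat.card_Ico]; omega
  · rw [Nat.card_Ico]; omega
  · rw [Finset.disjoint_union_left]
    exact ⟨ico_disj (by omega), (ico_disj (by omega)).symm⟩
  · rw [Finset.disjoint_union_left]
    exact ⟨ico_disj (by omega), ico_disj (by omega)⟩
  · exact ico_disj (by omega)
  · intro hpos
    exact Finset.mem_union_left _ (Finset.mem_Ico.mpr ⟨le_refl 0, by omega⟩)
  · intro hpos
    rw [Finset.mem_Ico]
    omega
  · intro hpos
    obtain ⟨hg1, hg2⟩ := g_le hd hpos
    rw [Finset.mem_Ico]
    omega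
  · -- SC for star 0
    intro hpos
    apply SC_zero hd
    · exact Finset.mem_union_left _ (Finset.mem_Ico.mpr ⟨le_refl 0, by omega⟩)
    · rw [Finset.card_union_of_disjoint (ico_disj (by omega)), Nat.card_Ico, Nat.card_Ico]
      omega
    · intro t ht
      have : d ^ t ≤ P := Nat.pow_le_pow_right hd0 (by omega)
      omega
    · intro t ht y hy
      have : d ^ t ≤ P := Nat.pow_le_pow_right hd0 (by omega)
      exact Finset.mem_union_left _ (Finset.mem_Ico.mpr ⟨by omega, by omega⟩)
  · -- SC for star 1
    intro hpos
    exact SC_interval hd hpos (fun t ht => Or.inl (pow_dvd_pow d (by omega)))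
  · -- SC for star 2
    intro hpos
    have := SC_top (h := h) hd hpos hn2N
    have hEq : N - n 2 + n 2 = N := by omega
    convert this using 2

lemma caseA (hd : 2 ≤ d) (n : Fin 3 → ℕ) (hord1 : n 2 ≤ n 1) (hord2 : n 1 ≤ n 0)
    (hsum : n 0 + n 1 + n 2 = d ^ h) (hbig' : d ^ (h - 1) ≤ n 0)
    (hn1 : 2 ≤ n 1) (hn1P : n 1 ≤ d ^ (h - 1))
    (hA : n 1 + n 2 ≤ d ^ (Nat.clog d (n 1))) : GoodPack d h n := by
  have hd0 : 0 < d := by omega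
  have hh1 : 1 ≤ h := by
    by_contra hc
    have h0 : h = 0 := by omega
    rw [h0] at hsum
    simp at hsum
    omega
  set N := d ^ h with hN
  set P := d ^ (h - 1) with hPdef
  have hNP : N = P * d := by
    rw [hN, hPdef, ← pow_succ]
    congr 1
    omega
  have hP1 : 1 ≤ P := pow_pos hd0 _
  have hP2 : P * 2 ≤ P * d := Nat.mul_le_mul_left P hd
  have hPN2 : P + P ≤ N := by omega
  set H1 := Nat.clog d (n 1) with hH1
  set G1 := d ^ H1 with hG1
  set g1 := d ^ (H1 - 1) with hg1
  have hH1pos : 0 < H1 := Nat.clog_pos hd hn1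
  have hn1G1 : n 1 ≤ G1 := Nat.le_pow_clog hd _
  have hg1n1 : g1 < n 1 := (Nat.lt_clog_iff_pow_lt hd).mp (by omega)
  have hH1h : H1 ≤ h - 1 := (Nat.clog_le_iff_le_pow hd).mpr hn1P
  have hG1P : G1 ≤ P := Nat.pow_le_pow_right hd0 hH1h
  have hg1d : g1 * d = G1 := by
    rw [hg1, hG1, ← pow_succ]
    congr 1
    omega
  have hg1pos : 1 ≤ g1 := pow_pos hd0 _
  have hg12 : g1 * 2 ≤ g1 * d := Nat.mul_le_mul_left g1 hd
  have hg1G1 : g1 + g1 ≤ G1 := by omega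
  have hn2N : n 2 ≤ N := by omega
  set o1 := N - G1 with ho1
  set o2 := N - G1 + g1 with ho2
  set s2 := N - n 1 - n 2 + g1 with hs2
  refine ⟨![Finset.Ico 0 o1 ∪ Finset.Ico o2 s2,
    Finset.Ico o1 o2 ∪ Finset.Ico s2 (N - n 2), Finset.Ico (N - n 2) N],
    ![0, o1, N - d ^ (Nat.clog d (n 2) - 1)],
    fin3_forall ?_ ?_ ?_, fin3_forall ?_ ?_ ?_, fin3_disj ?_ ?_ ?_,
    fin3_forall ?_ ?_ ?_, fin3_forall ?_ ?_ ?_⟩ <;>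
    simp only [Matrix.cons_val_zero, Matrix.cons_val_one, Matrix.head_cons,
      Matrix.cons_val_two, Matrix.tail_cons]
  · intro y hy
    rw [Finset.mem_union, Finset.mem_Ico, Finset.mem_Ico] at hy
    omega
  · intro y hy
    rw [Finset.mem_union, Finset.mem_Ico, Finset.mem_Ico] at hy
    omega
  · intro y hy; rw [Finset.mem_Ico] at hy; omega
  · rw [Finset.card_union_of_disjoint (ico_disj (by omega)), Nat.card_Ico, Nat.card_Ico]
    omega
  · rw [Finset.card_union_of_disjoint (ico_disj (by omega)), Nat.card_Ico, Nat.card_Ico]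
    omega
  · rw [Nat.card_Ico]; omega
  · rw [Finset.disjoint_union_left, Finset.disjoint_union_right, Finset.disjoint_union_right]
    exact ⟨⟨ico_disj (by omega), ico_disj (by omega)⟩,
      ⟨(ico_disj (by omega)).symm, ico_disj (by omega)⟩⟩
  · rw [Finset.disjoint_union_left]
    exact ⟨ico_disj (by omega), ico_disj (by omega)⟩
  · rw [Finset.disjoint_union_left]
    exact ⟨ico_disj (by omega), ico_disj (by omega)⟩
  · intro hpos
    exact Finset.mem_union_left _ (Finset.mem_Ico.mpr ⟨le_refl 0, by omega⟩)
  · intro hpos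
    exact Finset.mem_union_left _ (Finset.mem_Ico.mpr ⟨le_refl o1, by omega⟩)
  · intro hpos
    obtain ⟨hga, hgb⟩ := g_le hd hpos
    rw [Finset.mem_Ico]
    omega
  · -- SC star 0
    intro hpos
    apply SC_zero hd
    · exact Finset.mem_union_left _ (Finset.mem_Ico.mpr ⟨le_refl 0, by omega⟩)
    · rw [Finset.card_union_of_disjoint (ico_disj (by omega)), Nat.card_Ico, Nat.card_Ico]
      omega
    · intro t ht
      have : d ^ t ≤ P := Nat.pow_le_pow_right hd0 (by omega)
      omega
    · intro t ht y hy
      have : d ^ t ≤ P := Nat.pow_le_pow_right hd0 (by omega)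
      exact Finset.mem_union_left _ (Finset.mem_Ico.mpr ⟨by omega, by omega⟩)
  · -- SC star 1
    intro hpos
    apply SC_of hd0 (Finset.mem_union_left _ (Finset.mem_Ico.mpr ⟨le_refl o1, by omega⟩))
      (by rw [Finset.card_union_of_disjoint (ico_disj (by omega)), Nat.card_Ico, Nat.card_Ico]
          omega)
    intro t ht
    have hp1 : 0 < d ^ t := pow_pos hd0 t
    have hth : d ^ t ∣ N := pow_dvd_pow d (le_of_lt ht)
    have htN : d ^ t ≤ N := Nat.pow_le_pow_right hd0 (le_of_lt ht)
    rcases le_or_gt (d ^ t) g1 with htg | htg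
    · have htH1 : t ≤ H1 - 1 := by
        by_contra hc
        have : g1 < d ^ t := Nat.pow_lt_pow_right hd (by omega)
        omega
      have hdvd : d ^ t ∣ o1 := Nat.dvd_sub hth (pow_dvd_pow d (by omega : t ≤ H1))
      refine ⟨o1, hdvd, le_refl _, by omega, Or.inl ⟨by omega, fun y h1 h2 => ?_⟩⟩
      exact Finset.mem_union_left _ (Finset.mem_Ico.mpr ⟨h1, by omega⟩)
    · have htH1 : H1 ≤ t := by
        by_contra hc
        have : d ^ t ≤ g1 := Nat.pow_le_pow_right hd0 (by omega)
        omega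
      have hG1t : G1 ≤ d ^ t := Nat.pow_le_pow_right hd0 htH1
      rcases le_or_gt (d ^ t) (n 1) with hle | hlt
      · have h1 : d ^ t = G1 := by omega
        have h2 : n 1 = G1 := by omega
        have h3 : n 2 = 0 := by omega
        have hdvd : d ^ t ∣ o1 := Nat.dvd_sub hth (by rw [h1])
        refine ⟨o1, hdvd, le_refl _, by omega, Or.inl ⟨hle, fun y hy1 hy2 => ?_⟩⟩
        rcases lt_or_ge y o2 with hc | hc
        · exact Finset.mem_union_left _ (Finset.mem_Ico.mpr ⟨hy1, hc⟩)
        · exact Finset.mem_union_right _ (Finset.mem_Ico.mpr ⟨by omega, by omega⟩)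
      · have hdvd : d ^ t ∣ N - d ^ t := Nat.dvd_sub hth dvd_rfl
        refine ⟨N - d ^ t, hdvd, by omega, by omega, Or.inr ⟨by omega, fun y hy => ?_⟩⟩
        rw [Finset.mem_union, Finset.mem_Ico, Finset.mem_Ico] at hy
        omega
  · -- SC star 2
    intro hpos
    have := SC_top (h := h) hd hpos hn2N
    have hEq : N - n 2 + n 2 = N := by omega
    convert this using 2

lemma caseB (hd : 2 ≤ d) (n : Fin 3 → ℕ) (hord1 : n 2 ≤ n 1) (hord2 : n 1 ≤ n 0)
    (hsum : n 0 + n 1 + n 2 = d ^ h) (hbig' : d ^ (h - 1) ≤ n 0)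
    (hn1 : 2 ≤ n 1) (hn1P : n 1 ≤ d ^ (h - 1))
    (hB : d ^ (Nat.clog d (n 1)) < n 1 + n 2) : GoodPack d h n := by
  have hd0 : 0 < d := by omega
  have hh1 : 1 ≤ h := by
    by_contra hc
    have h0 : h = 0 := by omega
    rw [h0] at hsum
    simp at hsum
    omega
  set N := d ^ h with hN
  set P := d ^ (h - 1) with hPdef
  have hNP : N = P * d := by
    rw [hN, hPdef, ← pow_succ]; congr 1; omega
  have hP1 : 1 ≤ P := pow_pos hd0 _
  have hP2 : P * 2 ≤ P * d := Nat.mul_le_mul_left P hd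
  have hPN2 : P + P ≤ N := by omega
  set H1 := Nat.clog d (n 1) with hH1
  set G1 := d ^ H1 with hG1def
  set g1 := d ^ (H1 - 1) with hg1def
  have hH1pos : 0 < H1 := Nat.clog_pos hd hn1
  have hn1G1 : n 1 ≤ G1 := Nat.le_pow_clog hd _
  have hg1n1 : g1 < n 1 := (Nat.lt_clog_iff_pow_lt hd).mp (by omega)
  have hH1h : H1 ≤ h - 1 := (Nat.clog_le_iff_le_pow hd).mpr hn1P
  have hG1P : G1 ≤ P := Nat.pow_le_pow_right hd0 hH1h
  have hG1pos : 1 ≤ G1 := pow_pos hd0 _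
  have hn2pos : 0 < n 2 := by omega
  set H2 := Nat.clog d (n 2) with hH2
  set G2 := d ^ H2 with hG2def
  have hn2G2 : n 2 ≤ G2 := Nat.le_pow_clog hd _
  have hH21 : H2 ≤ H1 := Nat.clog_mono_right d hord1
  have hG21 : G2 ≤ G1 := Nat.pow_le_pow_right hd0 hH21
  have hG2pos : 1 ≤ G2 := pow_pos hd0 _
  -- key inequality : P + G1 + G2 ≤ N
  have hPG : P + G1 + G2 ≤ N := by
    rcases le_or_gt H1 (h - 2) with hc | hc
    · have hh2 : 2 ≤ h := by
        by_contra hcc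
        have : h = 1 := by omega
        rw [this] at hPdef
        simp at hPdef
        omega
      have h1 : G1 ≤ d ^ (h - 2) := Nat.pow_le_pow_right hd0 hc
      have h2 : d ^ (h - 2) * d = P := by
        rw [hPdef, ← pow_succ]; congr 1; omega
      have h3 : d ^ (h - 2) * 2 ≤ d ^ (h - 2) * d := Nat.mul_le_mul_left _ hd
      omega
    · have hH1eq : H1 = h - 1 := by omega
      have hG1eqP : G1 = P := by rw [hG1def, hH1eq]
      have hd3 : 3 ≤ d := by
        by_contra hcc
        have hd2 : d = 2 := by omega
        -- N = 2P, n1 + n2 ≤ N - n0 ≤ P = G1, contradiction with hB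
        have : n 1 + n 2 ≤ P := by
          have : P * d = P * 2 := by rw [hd2]
          omega
        omega
      have hP3 : P * 3 ≤ P * d := Nat.mul_le_mul_left P hd3
      omega
  set a2 := N - G1 - G2 with ha2
  refine ⟨![Finset.Ico 0 a2 ∪ Finset.Ico (a2 + n 2) (N - n 1),
    Finset.Ico (N - n 1) N, Finset.Ico a2 (a2 + n 2)],
    ![0, N - d ^ (Nat.clog d (n 1) - 1), a2],
    fin3_forall ?_ ?_ ?_, fin3_forall ?_ ?_ ?_, fin3_disj ?_ ?_ ?_,
    fin3_forall ?_ ?_ ?_, fin3_forall ?_ ?_ ?_⟩ <;>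
    simp only [Matrix.cons_val_zero, Matrix.cons_val_one, Matrix.head_cons,
      Matrix.cons_val_two, Matrix.tail_cons]
  · intro y hy
    rw [Finset.mem_union, Finset.mem_Ico, Finset.mem_Ico] at hy
    omega
  · intro y hy; rw [Finset.mem_Ico] at hy; omega
  · intro y hy; rw [Finset.mem_Ico] at hy; omega
  · rw [Finset.card_union_of_disjoint (ico_disj (by omega)), Nat.card_Ico, Nat.card_Ico]
    omega
  · rw [Nat.card_Ico]; omega
  · rw [Nat.card_Ico]; omega
  · rw [Finset.disjoint_union_left]
    exact ⟨ico_disj (by omega), ico_disj (by omega)⟩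
  · rw [Finset.disjoint_union_left]
    exact ⟨ico_disj (by omega), (ico_disj (by omega)).symm⟩
  · exact (ico_disj (by omega)).symm
  · intro hpos
    exact Finset.mem_union_left _ (Finset.mem_Ico.mpr ⟨le_refl 0, by omega⟩)
  · intro hpos
    obtain ⟨hga, hgb⟩ := g_le hd (by omega : 1 ≤ n 1)
    rw [Finset.mem_Ico]
    omega
  · intro hpos
    rw [Finset.mem_Ico]
    omega
  · -- SC star 0
    intro hpos
    apply SC_zero hd
    · exact Finset.mem_union_left _ (Finset.mem_Ico.mpr ⟨le_refl 0, by omega⟩)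
    · rw [Finset.card_union_of_disjoint (ico_disj (by omega)), Nat.card_Ico, Nat.card_Ico]
      omega
    · intro t ht
      have : d ^ t ≤ P := Nat.pow_le_pow_right hd0 (by omega)
      omega
    · intro t ht y hy
      have : d ^ t ≤ P := Nat.pow_le_pow_right hd0 (by omega)
      exact Finset.mem_union_left _ (Finset.mem_Ico.mpr ⟨by omega, by omega⟩)
  · -- SC star 1 : top interval
    intro hpos
    have := SC_top (h := h) hd (by omega : 1 ≤ n 1) (by omega : n 1 ≤ d ^ h)
    have hEq : N - n 1 + n 1 = N := by omega
    convert this using 2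
  · -- SC star 2 : GoodStart interval at a2
    intro hpos
    apply SC_interval hd hpos
    intro t ht
    have hp1 : 0 < d ^ t := pow_pos hd0 t
    have hth : d ^ t ∣ N := pow_dvd_pow d (le_of_lt ht)
    have htN : d ^ t ≤ N := Nat.pow_le_pow_right hd0 (le_of_lt ht)
    rcases le_or_gt t H2 with htH2 | htH2
    · left
      have h1 : d ^ t ∣ G2 := pow_dvd_pow d htH2
      have h2 : d ^ t ∣ G1 := pow_dvd_pow d (by omega)
      exact Nat.dvd_sub (Nat.dvd_sub hth h2) h1
    · right
      rcases le_or_gt t H1 with htH1 | htH1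
      · -- a2 % d^t = d^t - G2
        have hM : d ^ t ∣ N - G1 := Nat.dvd_sub hth (pow_dvd_pow d htH1)
        have hG2t : G2 ≤ d ^ t := Nat.pow_le_pow_right hd0 (by omega)
        have htP : d ^ t ≤ P := Nat.pow_le_pow_right hd0 (by omega)
        have hmod : (N - G1 - G2) % d ^ t = d ^ t - G2 :=
          mod_sub_helper hp1 hM (by omega) hG2t (by omega)
        rw [ha2, hmod]
        omega
      · -- a2 % d^t = d^t - (G1 + G2)
        have hG1d : G1 * d = d ^ (H1 + 1) := by
          rw [hG1def, ← pow_succ]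
        have hG1t : d ^ (H1 + 1) ≤ d ^ t := Nat.pow_le_pow_right hd0 (by omega)
        have hG12 : G1 * 2 ≤ G1 * d := Nat.mul_le_mul_left G1 hd
        have hsub : N - G1 - G2 = N - (G1 + G2) := by omega
        have hmod : (N - (G1 + G2)) % d ^ t = d ^ t - (G1 + G2) :=
          mod_sub_helper hp1 hth (by omega) (by omega) (by omega)
        rw [ha2, hsub, hmod]
        omega

end ThreeStars

/-- Let the guest graph be the disjoint union of three stars with `n 0 ≥ n 1 ≥ n 2`
vertices, with `n 0 + n 1 + n 2 = d^h` a power of `d ≥ 2` and `n 0 ≥ d^h/d`, and let the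
host be the complete `d`-regular tree of height `h`.  The minimum total arrangement cost
is `Σ_i 2·(h_i·n_i − (d^{h_i} − 1)/(d − 1))` with `h_i = ⌈log_d (n i)⌉`. -/
theorem three_stars_optimal_value (d h : ℕ) (hd : 2 ≤ d) (n : Fin 3 → ℕ)
    (hord1 : n 2 ≤ n 1) (hord2 : n 1 ≤ n 0)
    (hsum : n 0 + n 1 + n 2 = d ^ h) (hbig : d ^ h / d ≤ n 0) :
    IsLeast {c : ℚ | ∃ φ : ((i : Fin 3) × Fin (n i)) → Fin (d ^ h),
        Function.Injective φ ∧ c = (triStarCost d h n φ : ℚ)}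
      (∑ i : Fin 3, 2 * ((Nat.clog d (n i) : ℚ) * (n i) -
        ((d : ℚ) ^ Nat.clog d (n i) - 1) / ((d : ℚ) - 1))) := by
  have hd0 : 0 < d := by omega
  have hbig' : d ^ (h - 1) ≤ n 0 := by
    rcases Nat.eq_zero_or_pos h with h0 | h1
    · subst h0
      simp only [Nat.zero_sub, pow_zero] at hsum ⊢
      omega
    · have heq : d ^ h = d ^ (h - 1) * d := by
        rw [← pow_succ]; congr 1; omega
      rw [heq, Nat.mul_div_cancel _ hd0] at hbig
      exact hbig
  have hpack : ThreeStars.GoodPack d h n := by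
    rcases le_or_gt (n 1) 1 with hc1 | hc1
    · exact ThreeStars.caseD hd n hord1 hsum hc1
    · rcases lt_or_ge (d ^ (h - 1)) (n 1) with hc2 | hc2
      · exact ThreeStars.caseC hd n hord1 hord2 hsum hc2
      · rcases le_or_gt (n 1 + n 2) (d ^ Nat.clog d (n 1)) with hc3 | hc3
        · exact ThreeStars.caseA hd n hord1 hord2 hsum hbig' hc1 hc2 hc3
        · exact ThreeStars.caseB hd n hord1 hord2 hsum hbig' hc1 hc2 hc3
  obtain ⟨S, x, hsub, hcard, hdisj, hx, hSC⟩ := hpack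
  obtain ⟨φ, hφ, hcost⟩ := ThreeStars.exists_arrangement hd n S x hsub hcard hdisj hx hSC
  have hvalue : (∑ i : Fin 3, 2 * ((Nat.clog d (n i) : ℚ) * (n i) -
      ((d : ℚ) ^ Nat.clog d (n i) - 1) / ((d : ℚ) - 1)))
      = ((∑ i : Fin 3, 2 * ThreeStars.Vn d (n i) : ℕ) : ℚ) := by
    rw [Nat.cast_sum]
    exact Finset.sum_congr rfl fun i _ => (ThreeStars.Vn_cast hd (n i)).symm
  constructor
  · exact ⟨φ, hφ, by rw [hvalue, hcost]⟩
  · rintro c ⟨φ', hφ', rfl⟩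
    rw [hvalue]
    exact_mod_cast ThreeStars.cost_ge n φ' hd hφ'
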